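/- Let 𝒴_n = {(X_1, Y_1), ..., (X_n, Y_n)} be a fixed finite sample with no repeated values of X_i. For r > 0 let k = max_{θ ∈ ℝ²} #{i ≤ n : |X_i a + b − Y_i|² ≤ r²(X_i² + 1)} be the maximal number of data points covered by a Hough template. Then the finite-sample addition breakdown point of the Hough transform estimator equals (k − 1)/(n + k − 1); that is: (i) for every m ≤ k − 2 there exists a bound B < ∞ (depending only on 𝒴_n, r and m) such that for every added data set 𝒴′_m of m points, every maximizer θ of the objective Σ_{(x,y) ∈ 𝒴_n ∪ 𝒴′_m} 1{|xa + b − y|² ≤ r²(x² + 1)} satisfies ‖θ‖ ≤ B; and (ii) for every R > 0 there exists an added data set 𝒴′_{k−1} of k − 1 points such that some maximizer θ of the objective over 𝒴_n ∪ 𝒴′_{k−1} satisfies ‖θ‖ > R. -/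
import Mathlib


open scoped Classical in
/-- The number of data points of `d` covered by the Hough template with center `θ`
and radius `r`. -/
noncomputable def houghCount {m : ℕ} (r : ℝ) (d : Fin m → ℝ × ℝ) (θ : ℝ × ℝ) : ℕ :=
  (Finset.univ.filter fun i : Fin m =>
    |(d i).1 * θ.1 + θ.2 - (d i).2| ^ 2 ≤ r ^ 2 * ((d i).1 ^ 2 + 1)).card

lemma cov_abs {r x u : ℝ} (hr : 0 < r) (h : |u| ^ 2 ≤ r ^ 2 * (x ^ 2 + 1)) :
    |u| ≤ r * Real.sqrt (x ^ 2 + 1) := by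
  have hs : Real.sqrt (x ^ 2 + 1) ^ 2 = x ^ 2 + 1 :=
    Real.sq_sqrt (by positivity)
  nlinarith [abs_nonneg u, Real.sqrt_nonneg (x ^ 2 + 1), hr.le,
    mul_nonneg hr.le (Real.sqrt_nonneg (x ^ 2 + 1))]

lemma hough_pair_bound {n : ℕ} (d : Fin n → ℝ × ℝ)
    (hinj : Function.Injective (fun i => (d i).1)) (r : ℝ) (hr : 0 < r) :
    ∃ M : ℝ, 0 ≤ M ∧ ∀ θ : ℝ × ℝ, ∀ i j : Fin n, i ≠ j →
      |(d i).1 * θ.1 + θ.2 - (d i).2| ^ 2 ≤ r ^ 2 * ((d i).1 ^ 2 + 1) →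
      |(d j).1 * θ.1 + θ.2 - (d j).2| ^ 2 ≤ r ^ 2 * ((d j).1 ^ 2 + 1) →
      |θ.1| ≤ M ∧ |θ.2| ≤ M := by
  set s : Fin n → ℝ := fun i => Real.sqrt ((d i).1 ^ 2 + 1) with hs
  set f : Fin n × Fin n → ℝ := fun p =>
    (|(d p.1).2 - (d p.2).2| + r * (s p.1 + s p.2)) / |(d p.1).1 - (d p.2).1| with hf
  set g : Fin n × Fin n → ℝ := fun p =>
    r * s p.1 + |(d p.1).1| * f p + |(d p.1).2| with hg
  obtain ⟨M, hM⟩ := Finite.exists_le (fun p : Fin n × Fin n => max (f p) (g p))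
  refine ⟨max M 0, le_max_right _ _, ?_⟩
  intro θ i j hij hi hj
  have hx : (d i).1 ≠ (d j).1 := fun h => hij (hinj h)
  have hxpos : 0 < |(d i).1 - (d j).1| := abs_pos.2 (sub_ne_zero.2 hx)
  have hui : |(d i).1 * θ.1 + θ.2 - (d i).2| ≤ r * s i := cov_abs hr hi
  have huj : |(d j).1 * θ.1 + θ.2 - (d j).2| ≤ r * s j := cov_abs hr hj
  have ha : |θ.1| ≤ f (i, j) := by
    rw [hf]
    rw [le_div_iff₀ hxpos]
    have key : |θ.1| * |(d i).1 - (d j).1| = |((d i).1 - (d j).1) * θ.1| := by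
      rw [abs_mul]; ring
    rw [key]
    have h2 : ((d i).1 - (d j).1) * θ.1 =
        ((d i).1 * θ.1 + θ.2 - (d i).2) - ((d j).1 * θ.1 + θ.2 - (d j).2)
          + ((d i).2 - (d j).2) := by ring
    rw [h2]
    calc |((d i).1 * θ.1 + θ.2 - (d i).2) - ((d j).1 * θ.1 + θ.2 - (d j).2)
          + ((d i).2 - (d j).2)|
        ≤ |((d i).1 * θ.1 + θ.2 - (d i).2) - ((d j).1 * θ.1 + θ.2 - (d j).2)|
          + |(d i).2 - (d j).2| := abs_add_le _ _
      _ ≤ (|(d i).1 * θ.1 + θ.2 - (d i).2| + |(d j).1 * θ.1 + θ.2 - (d j).2|)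
          + |(d i).2 - (d j).2| := by gcongr; exact abs_sub _ _
      _ ≤ (r * s i + r * s j) + |(d i).2 - (d j).2| := by gcongr
      _ = |(d i).2 - (d j).2| + r * (s i + s j) := by ring
  have hb : |θ.2| ≤ g (i, j) := by
    have h2 : θ.2 = ((d i).1 * θ.1 + θ.2 - (d i).2) - (d i).1 * θ.1 + (d i).2 := by ring
    rw [hg]
    calc |θ.2| = |((d i).1 * θ.1 + θ.2 - (d i).2) - (d i).1 * θ.1 + (d i).2| := by rw [← h2]
      _ ≤ |((d i).1 * θ.1 + θ.2 - (d i).2) - (d i).1 * θ.1| + |(d i).2| := abs_add_le _ _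
      _ ≤ |(d i).1 * θ.1 + θ.2 - (d i).2| + |(d i).1 * θ.1| + |(d i).2| := by
          gcongr; exact abs_sub _ _
      _ = |(d i).1 * θ.1 + θ.2 - (d i).2| + |(d i).1| * |θ.1| + |(d i).2| := by
          rw [abs_mul]
      _ ≤ r * s i + |(d i).1| * f (i, j) + |(d i).2| := by
          gcongr
  have h1 := hM (i, j)
  constructor
  · exact le_trans ha (le_trans (le_trans (le_max_left _ _) h1) (le_max_left _ _))
  · exact le_trans hb (le_trans (le_trans (le_max_right _ _) h1) (le_max_left _ _))

/-- The finite-sample addition breakdown point of the Hough transform estimator is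
`(k − 1)/(n + k − 1)`, where `k` is the maximal number of data points covered by a
Hough template: (i) adding at most `k − 2` points cannot drive a maximizer of the
combined objective beyond a fixed bound; (ii) adding `k − 1` suitably chosen points
can produce a maximizer of arbitrarily large norm. -/
theorem hough_addition_breakdown_point
    (n : ℕ) (d : Fin n → ℝ × ℝ)
    (hinj : Function.Injective (fun i => (d i).1))
    (r : ℝ) (hr : 0 < r) (k : ℕ)
    (hk_ub : ∀ θ : ℝ × ℝ, houghCount r d θ ≤ k)
    (hk_ex : ∃ θ : ℝ × ℝ, houghCount r d θ = k) :
    (∀ m : ℕ, m + 2 ≤ k → ∃ B : ℝ, ∀ add : Fin m → ℝ × ℝ, ∀ θ : ℝ × ℝ,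
      (∀ θ' : ℝ × ℝ, houghCount r d θ' + houghCount r add θ'
          ≤ houghCount r d θ + houghCount r add θ) →
      ‖θ‖ ≤ B) ∧
    (∀ R : ℝ, 0 < R → ∃ add : Fin (k - 1) → ℝ × ℝ, ∃ θ : ℝ × ℝ,
      (∀ θ' : ℝ × ℝ, houghCount r d θ' + houghCount r add θ'
          ≤ houghCount r d θ + houghCount r add θ) ∧
      R < ‖θ‖) := by
  classical
  obtain ⟨M, hM0, hM⟩ := hough_pair_bound d hinj r hr
  constructor
  · -- part (i)
    intro m hm
    refine ⟨M, ?_⟩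
    intro add θ hmax
    obtain ⟨θ₀, hθ₀⟩ := hk_ex
    have h1 : k ≤ houghCount r d θ + houghCount r add θ := by
      have h := hmax θ₀
      omega
    have h2 : houghCount r add θ ≤ m :=
      le_trans (Finset.card_filter_le _ _) (by simp)
    have h3 : 1 < houghCount r d θ := by omega
    rw [houghCount] at h3
    obtain ⟨i, hi, j, hj, hij⟩ := Finset.one_lt_card.mp h3
    simp only [Finset.mem_filter, Finset.mem_univ, true_and] at hi hj
    obtain ⟨hA, hB⟩ := hM θ i j hij hi hj
    have hnorm : ‖θ‖ = max |θ.1| |θ.2| := by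
      rw [Prod.norm_def, Real.norm_eq_abs, Real.norm_eq_abs]
    rw [hnorm]
    exact max_le hA hB
  · -- part (ii)
    intro R hR
    by_cases hn : n = 0
    · have hk0 : k = 0 := by
        obtain ⟨θ₀, hθ₀⟩ := hk_ex
        have h : houghCount r d θ₀ ≤ 0 :=
          le_trans (Finset.card_filter_le _ _) (by simp [hn])
        omega
      refine ⟨fun _ => (0, 0), (R + 1, 0), ?_, ?_⟩
      · intro θ'
        have h1 : houghCount r d θ' ≤ 0 :=
          le_trans (Finset.card_filter_le _ _) (by simp [hn])
        have h2 : houghCount r (fun _ : Fin (k - 1) => ((0 : ℝ), (0 : ℝ))) θ' ≤ 0 :=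
          le_trans (Finset.card_filter_le _ _) (by simp [hk0])
        omega
      · calc R < R + 1 := by linarith
          _ = |R + 1| := (abs_of_pos (by linarith)).symm
          _ ≤ ‖((R + 1 : ℝ), (0 : ℝ))‖ := by
              simpa using norm_fst_le ((R + 1, 0) : ℝ × ℝ)
    · have hnpos : 0 < n := Nat.pos_of_ne_zero hn
      set i0 : Fin n := ⟨0, hnpos⟩ with hi0
      have hk1 : 1 ≤ k := by
        refine le_trans ?_ (hk_ub (0, (d i0).2))
        rw [houghCount, Nat.one_le_iff_ne_zero, ← Nat.pos_iff_ne_zero, Finset.card_pos]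
        refine ⟨i0, ?_⟩
        simp only [Finset.mem_filter, Finset.mem_univ, true_and]
        simp only [mul_zero, zero_add, sub_self, abs_zero]
        norm_num
        positivity
      set a : ℝ := M + r + R + 1 with ha_def
      set b0 : ℝ := (d i0).2 - a * (d i0).1 with hb0_def
      set t : ℝ := r + M + |b0| + 1 with ht_def
      have ht : 0 < t := by
        have := abs_nonneg b0
        rw [ht_def]; linarith
      refine ⟨fun _ => (t, a * t + b0), (a, b0), ?_, ?_⟩
      · -- maximizer property
        have hadd : houghCount r (fun _ : Fin (k - 1) => (t, a * t + b0)) (a, b0)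
            = k - 1 := by
          rw [houghCount, Finset.filter_true_of_mem, Finset.card_univ, Fintype.card_fin]
          intro i _
          have hz : t * a + b0 - (a * t + b0) = 0 := by ring
          simp only [hz, abs_zero]
          norm_num
          positivity
        have hd1 : 1 ≤ houghCount r d (a, b0) := by
          rw [houghCount, Nat.one_le_iff_ne_zero, ← Nat.pos_iff_ne_zero, Finset.card_pos]
          refine ⟨i0, ?_⟩
          simp only [Finset.mem_filter, Finset.mem_univ, true_and]
          have hz : (d i0).1 * a + b0 - (d i0).2 = 0 := by rw [hb0_def]; ring
          simp only [hz, abs_zero]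
          norm_num
          positivity
        intro θ'
        rcases Nat.eq_zero_or_pos
            (houghCount r (fun _ : Fin (k - 1) => (t, a * t + b0)) θ') with h0 | hpos
        · have := hk_ub θ'
          omega
        · -- θ' covers the added point
          have hz : |t * θ'.1 + θ'.2 - (a * t + b0)| ^ 2 ≤ r ^ 2 * (t ^ 2 + 1) := by
            rw [houghCount] at hpos
            obtain ⟨i, hi⟩ := Finset.card_pos.mp hpos
            simp only [Finset.mem_filter, Finset.mem_univ, true_and] at hi
            exact hi
          have hd' : houghCount r d θ' ≤ 1 := by
            by_contra hcon
            push_neg at hcon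
            rw [houghCount] at hcon
            obtain ⟨i, hi, j, hj, hij⟩ := Finset.one_lt_card.mp hcon
            simp only [Finset.mem_filter, Finset.mem_univ, true_and] at hi hj
            obtain ⟨hA, hB⟩ := hM θ' i j hij hi hj
            have hzz : |t * θ'.1 + θ'.2 - (a * t + b0)| ≤ r * (t + 1) := by
              have h1 := cov_abs hr hz
              have h2 : Real.sqrt (t ^ 2 + 1) ≤ t + 1 := by
                have h3 : Real.sqrt (t ^ 2 + 1) ≤ Real.sqrt ((t + 1) ^ 2) :=
                  Real.sqrt_le_sqrt (by nlinarith)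
                rwa [Real.sqrt_sq (by linarith)] at h3
              calc |t * θ'.1 + θ'.2 - (a * t + b0)| ≤ r * Real.sqrt (t ^ 2 + 1) := h1
                _ ≤ r * (t + 1) := by gcongr
            have p1 : θ'.1 ≤ M := le_trans (le_abs_self _) hA
            have p2 : θ'.2 ≤ M := le_trans (le_abs_self _) hB
            have p3 : -(r * (t + 1)) ≤ t * θ'.1 + θ'.2 - (a * t + b0) := (abs_le.mp hzz).1
            have p4 : t * θ'.1 ≤ t * M := mul_le_mul_of_nonneg_left p1 ht.le
            have p5 : 0 ≤ t * R := mul_nonneg ht.le hR.le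
            have pat : a * t = M * t + r * t + R * t + t := by rw [ha_def]; ring
            have hb0le : b0 ≤ |b0| := le_abs_self b0
            have hbnn : 0 ≤ |b0| := abs_nonneg b0
            have hb0ge : -|b0| ≤ b0 := neg_abs_le b0
            have htdef : t = r + M + |b0| + 1 := ht_def
            linarith
          have h2 : houghCount r (fun _ : Fin (k - 1) => (t, a * t + b0)) θ' ≤ k - 1 :=
            le_trans (Finset.card_filter_le _ _) (by simp)
          omega
      · -- large norm
        calc R < a := by rw [ha_def]; linarith
          _ = |a| := (abs_of_pos (by rw [ha_def]; linarith)).symm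
          _ ≤ ‖((a : ℝ), (b0 : ℝ))‖ := by
              simpa using norm_fst_le ((a, b0) : ℝ × ℝ)
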